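/- A complete set of representatives for the double coset space Γ_{2,0} \ Sp(2,ℤ) / l_{1,1}(SL₂(ℤ) × SL₂(ℤ)) is given by {U₂(0₂)} ∪ {U₂([[0,d],[d,0]]) : d ∈ ℕ, d ≥ 1}, where U₂(a) = [[1₂,0],[a,1₂]]. -/

import Mathlib

open Matrix

noncomputable def stmt15J : Matrix (Fin 4) (Fin 4) ℤ :=
  !![0, 0, 1, 0; 0, 0, 0, 1; -1, 0, 0, 0; 0, -1, 0, 0]

/-- `Sp(2,ℤ)` as a set of `4 × 4` integer matrices. -/
def stmt15Sp2 : Set (Matrix (Fin 4) (Fin 4) ℤ) :=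
  {g | gᵀ * stmt15J * g = stmt15J}

/-- The Siegel parabolic `Γ_{2,0} = {[[a,b],[c,d]] ∈ Sp(2,ℤ) : c = 0}`. -/
def stmt15Gamma20 : Set (Matrix (Fin 4) (Fin 4) ℤ) :=
  {g | g ∈ stmt15Sp2 ∧ g 2 0 = 0 ∧ g 2 1 = 0 ∧ g 3 0 = 0 ∧ g 3 1 = 0}

/-- `U₂(a) = [[1₂,0],[a,1₂]]`. -/
noncomputable def stmt15U2 (a : Matrix (Fin 2) (Fin 2) ℤ) : Matrix (Fin 4) (Fin 4) ℤ :=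
  !![1, 0, 0, 0; 0, 1, 0, 0; a 0 0, a 0 1, 1, 0; a 1 0, a 1 1, 0, 1]

/-- The block-diagonal embedding `l_{1,1} : SL₂(ℤ) × SL₂(ℤ) → Sp(2,ℤ)`. -/
noncomputable def stmt15embed (γ δ : Matrix.SpecialLinearGroup (Fin 2) ℤ) :
    Matrix (Fin 4) (Fin 4) ℤ :=
  !![γ 0 0, 0, γ 0 1, 0; 0, δ 0 0, 0, δ 0 1; γ 1 0, 0, γ 1 1, 0; 0, δ 1 0, 0, δ 1 1]

/-- The representatives: `rep 0 = U₂(0₂)` and `rep d = U₂([[0,d],[d,0]])` for `d ≥ 1`. -/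
noncomputable def stmt15rep (d : ℕ) : Matrix (Fin 4) (Fin 4) ℤ :=
  stmt15U2 !![0, (d : ℤ); (d : ℤ), 0]

/-! ## Auxiliary infrastructure -/

abbrev SM2 := Matrix (Fin 2) (Fin 2) ℤ
abbrev SM4 := Matrix (Fin 4) (Fin 4) ℤ
abbrev SSL2 := Matrix.SpecialLinearGroup (Fin 2) ℤ

def quad (A B C D : SM2) : SM4 :=
  !![A 0 0, A 0 1, B 0 0, B 0 1;
     A 1 0, A 1 1, B 1 0, B 1 1;
     C 0 0, C 0 1, D 0 0, D 0 1;
     C 1 0, C 1 1, D 1 0, D 1 1]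

lemma quad_mul (A B C D A' B' C' D' : SM2) :
    quad A B C D * quad A' B' C' D' =
    quad (A*A' + B*C') (A*B' + B*D') (C*A' + D*C') (C*B' + D*D') := by
  ext i j
  fin_cases i <;> fin_cases j <;>
    simp [quad, Matrix.mul_apply, Fin.sum_univ_four, Fin.sum_univ_two, Matrix.add_apply] <;> ring

lemma quad_transpose (A B C D : SM2) : (quad A B C D)ᵀ = quad Aᵀ Cᵀ Bᵀ Dᵀ := by
  ext i j
  fin_cases i <;> fin_cases j <;>
    simp [quad, Matrix.transpose_apply, Matrix.vecHead, Matrix.vecTail]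

lemma quad_one : quad 1 0 0 1 = 1 := by
  ext i j
  fin_cases i <;> fin_cases j <;>
    simp [quad, Matrix.one_apply, Matrix.zero_apply, Matrix.vecHead, Matrix.vecTail]

lemma g_eq_quad (g : SM4) : g = quad !![g 0 0, g 0 1; g 1 0, g 1 1] !![g 0 2, g 0 3; g 1 2, g 1 3]
    !![g 2 0, g 2 1; g 3 0, g 3 1] !![g 2 2, g 2 3; g 3 2, g 3 3] := by
  ext i j
  fin_cases i <;> fin_cases j <;> simp [quad]

lemma quad_inj {A B C D A' B' C' D' : SM2} (h : quad A B C D = quad A' B' C' D') :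
    A = A' ∧ B = B' ∧ C = C' ∧ D = D' := by
  refine ⟨?_, ?_, ?_, ?_⟩ <;> ext i j <;> fin_cases i <;> fin_cases j
  · exact congrFun (congrFun h 0) 0
  · exact congrFun (congrFun h 0) 1
  · exact congrFun (congrFun h 1) 0
  · exact congrFun (congrFun h 1) 1
  · exact congrFun (congrFun h 0) 2
  · exact congrFun (congrFun h 0) 3
  · exact congrFun (congrFun h 1) 2
  · exact congrFun (congrFun h 1) 3
  · exact congrFun (congrFun h 2) 0
  · exact congrFun (congrFun h 2) 1
  · exact congrFun (congrFun h 3) 0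
  · exact congrFun (congrFun h 3) 1
  · exact congrFun (congrFun h 2) 2
  · exact congrFun (congrFun h 2) 3
  · exact congrFun (congrFun h 3) 2
  · exact congrFun (congrFun h 3) 3

lemma J_eq : stmt15J = quad 0 1 (-1) 0 := by
  ext i j
  fin_cases i <;> fin_cases j <;>
    simp [stmt15J, quad, Matrix.one_apply, Matrix.vecHead, Matrix.vecTail]

lemma U2_eq (a : SM2) : stmt15U2 a = quad 1 0 a 1 := by
  ext i j
  fin_cases i <;> fin_cases j <;>
    simp [stmt15U2, quad, Matrix.one_apply, Matrix.vecHead, Matrix.vecTail]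

def dg (x y : ℤ) : SM2 := !![x, 0; 0, y]

lemma embed_eq (γ δ : SSL2) : stmt15embed γ δ =
    quad (dg (γ 0 0) (δ 0 0)) (dg (γ 0 1) (δ 0 1)) (dg (γ 1 0) (δ 1 0)) (dg (γ 1 1) (δ 1 1)) := by
  ext i j
  fin_cases i <;> fin_cases j <;>
    simp [stmt15embed, quad, dg, Matrix.vecHead, Matrix.vecTail]

/-! ## Symplectic group lemmas -/

lemma quad_congr {A B C D A' B' C' D' : SM2} (h1 : A = A') (h2 : B = B') (h3 : C = C')
    (h4 : D = D') : quad A B C D = quad A' B' C' D' := by rw [h1, h2, h3, h4]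

lemma sp2_mul {g h : SM4} (hg : g ∈ stmt15Sp2) (hh : h ∈ stmt15Sp2) :
    g * h ∈ stmt15Sp2 := by
  have hg' : gᵀ * stmt15J * g = stmt15J := hg
  have hh' : hᵀ * stmt15J * h = stmt15J := hh
  show (g * h)ᵀ * stmt15J * (g * h) = stmt15J
  calc (g * h)ᵀ * stmt15J * (g * h) = hᵀ * (gᵀ * stmt15J * g) * h := by
        rw [Matrix.transpose_mul]; noncomm_ring
    _ = stmt15J := by rw [hg', hh']

lemma sp2_intro (A B C D : SM2) (h1 : Aᵀ*C = Cᵀ*A) (h2 : Bᵀ*D = Dᵀ*B)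
    (h3 : Aᵀ*D - Cᵀ*B = 1) : quad A B C D ∈ stmt15Sp2 := by
  show (quad A B C D)ᵀ * stmt15J * quad A B C D = stmt15J
  have h3' : Dᵀ*A - Bᵀ*C = 1 := by
    have := congrArg Matrix.transpose h3
    simpa [Matrix.transpose_sub, Matrix.transpose_mul] using this
  rw [J_eq, quad_transpose, quad_mul, quad_mul]
  refine quad_congr ?_ ?_ ?_ ?_
  · have e : (Aᵀ*0 + Cᵀ*(-1))*A + (Aᵀ*1 + Cᵀ*0)*C = Aᵀ*C - Cᵀ*A := by noncomm_ring
    rw [e, h1, sub_self]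
  · have e : (Aᵀ*0 + Cᵀ*(-1))*B + (Aᵀ*1 + Cᵀ*0)*D = Aᵀ*D - Cᵀ*B := by noncomm_ring
    rw [e, h3]
  · have e : (Bᵀ*0 + Dᵀ*(-1))*A + (Bᵀ*1 + Dᵀ*0)*C = -(Dᵀ*A - Bᵀ*C) := by noncomm_ring
    rw [e, h3']
  · have e : (Bᵀ*0 + Dᵀ*(-1))*B + (Bᵀ*1 + Dᵀ*0)*D = Bᵀ*D - Dᵀ*B := by noncomm_ring
    rw [e, h2, sub_self]

lemma JJ : stmt15J * stmt15J = -1 := by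
  ext i j
  fin_cases i <;> fin_cases j <;>
    simp [stmt15J, Matrix.mul_apply, Fin.sum_univ_four, Matrix.one_apply,
      Matrix.vecHead, Matrix.vecTail]

lemma sp2_inv_left {g : SM4} (hg : g ∈ stmt15Sp2) :
    (-stmt15J * gᵀ * stmt15J) * g = 1 := by
  have hg' : gᵀ * stmt15J * g = stmt15J := hg
  calc (-stmt15J * gᵀ * stmt15J) * g = -stmt15J * (gᵀ * stmt15J * g) := by noncomm_ring
    _ = -(stmt15J * stmt15J) := by rw [hg']; noncomm_ring
    _ = 1 := by rw [JJ]; simp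

lemma sp2_inv_right {g : SM4} (hg : g ∈ stmt15Sp2) :
    g * (-stmt15J * gᵀ * stmt15J) = 1 :=
  mul_eq_one_comm.mp (sp2_inv_left hg)

lemma negJ_eq : -stmt15J = quad 0 (-1) 1 0 := by
  ext i j
  fin_cases i <;> fin_cases j <;>
    simp [stmt15J, quad, Matrix.one_apply, Matrix.vecHead, Matrix.vecTail]

lemma sympInv_eq (A B C D : SM2) :
    -stmt15J * (quad A B C D)ᵀ * stmt15J = quad Dᵀ (-Bᵀ) (-Cᵀ) Aᵀ := by
  rw [negJ_eq, J_eq, quad_transpose, quad_mul, quad_mul]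
  refine quad_congr ?_ ?_ ?_ ?_ <;> noncomm_ring

/-- The fundamental relations used everywhere. -/
lemma sp_rels {A B C D : SM2} (hg : quad A B C D ∈ stmt15Sp2) :
    Dᵀ * A - Bᵀ * C = 1 ∧ C * Dᵀ = D * Cᵀ ∧ D * Aᵀ - C * Bᵀ = 1 := by
  have h1 := sp2_inv_left hg
  have h2 := sp2_inv_right hg
  rw [sympInv_eq] at h1 h2
  rw [quad_mul, ← quad_one] at h1 h2
  obtain ⟨e1, _, _, _⟩ := quad_inj h1
  obtain ⟨_, _, e3, e4⟩ := quad_inj h2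
  refine ⟨?_, ?_, ?_⟩
  · have e : Dᵀ*A - Bᵀ*C = Dᵀ*A + (-Bᵀ)*C := by noncomm_ring
    rw [e, e1]
  · rw [← sub_eq_zero]
    have e : C*Dᵀ - D*Cᵀ = C*Dᵀ + D*(-Cᵀ) := by noncomm_ring
    rw [e, e3]
  · have e : D*Aᵀ - C*Bᵀ = C*(-Bᵀ) + D*Aᵀ := by noncomm_ring
    rw [e, e4]

/-! ## dg and small 2x2 helpers -/

lemma dg_congr {x y z w : ℤ} (h1 : x = z) (h2 : y = w) : dg x y = dg z w := by rw [h1, h2]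

lemma dg_mul (x y z w : ℤ) : dg x y * dg z w = dg (x*z) (y*w) := by
  rw [dg, dg, dg, Matrix.mul_fin_two]; norm_num

lemma dg_add (x y z w : ℤ) : dg x y + dg z w = dg (x+z) (y+w) := by
  ext i j; fin_cases i <;> fin_cases j <;> simp [dg]

lemma dg_sub (x y z w : ℤ) : dg x y - dg z w = dg (x-z) (y-w) := by
  ext i j; fin_cases i <;> fin_cases j <;> simp [dg]

lemma dg_transpose (x y : ℤ) : (dg x y)ᵀ = dg x y := by
  ext i j; fin_cases i <;> fin_cases j <;> simp [dg]

lemma dg_one : dg 1 1 = 1 := by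
  ext i j; fin_cases i <;> fin_cases j <;> simp [dg, Matrix.one_apply]

lemma dg_zero : dg 0 0 = 0 := by
  ext i j; fin_cases i <;> fin_cases j <;> simp [dg]

lemma eq2 {a b c d e f g h : ℤ} (heq : (!![a,b;c,d] : SM2) = !![e,f;g,h]) :
    a = e ∧ b = f ∧ c = g ∧ d = h :=
  ⟨congrFun (congrFun heq 0) 0, congrFun (congrFun heq 0) 1,
   congrFun (congrFun heq 1) 0, congrFun (congrFun heq 1) 1⟩

def mkSL2 (a b c d : ℤ) (h : a*d - b*c = 1) : SSL2 :=
  ⟨!![a,b;c,d], by rw [Matrix.det_fin_two_of]; exact h⟩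

lemma mkSL2_coe (a b c d : ℤ) (h : a*d - b*c = 1) :
    ((mkSL2 a b c d h : SSL2) : SM2) = !![a,b;c,d] := rfl

lemma sl2_det (γ : SSL2) : γ 0 0 * γ 1 1 - γ 0 1 * γ 1 0 = 1 := by
  have := γ.prop
  rw [Matrix.det_fin_two] at this
  exact this

lemma sl2_mul_apply (γ γ' : SSL2) (i j : Fin 2) :
    (γ * γ') i j = γ i 0 * γ' 0 j + γ i 1 * γ' 1 j := by
  show ((γ * γ' : SSL2) : SM2) i j = _
  rw [Matrix.SpecialLinearGroup.coe_mul, Matrix.mul_apply, Fin.sum_univ_two]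

lemma sl2_one_apply (i j : Fin 2) : (1 : SSL2) i j = if i = j then 1 else 0 := by
  show ((1 : SSL2) : SM2) i j = _
  rw [Matrix.SpecialLinearGroup.coe_one, Matrix.one_apply]

/-! ## embed lemmas -/

lemma embed_mul (γ δ γ' δ' : SSL2) :
    stmt15embed γ δ * stmt15embed γ' δ' = stmt15embed (γ*γ') (δ*δ') := by
  rw [embed_eq, embed_eq, embed_eq, quad_mul]
  refine quad_congr ?_ ?_ ?_ ?_
  all_goals rw [dg_mul, dg_mul, dg_add]
  all_goals exact dg_congr (by rw [sl2_mul_apply]) (by rw [sl2_mul_apply])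

lemma embed_one : stmt15embed 1 1 = 1 := by
  rw [embed_eq]
  have h0 : ∀ i j : Fin 2, i ≠ j → (1 : SSL2) i j = 0 := by
    intro i j hij; rw [sl2_one_apply, if_neg hij]
  have h1 : ∀ i : Fin 2, (1 : SSL2) i i = 1 := by
    intro i; rw [sl2_one_apply, if_pos rfl]
  rw [h1, h1, h0 0 1 (by decide), h0 1 0 (by decide), dg_one, dg_zero, quad_one]

lemma embed_mem (γ δ : SSL2) : stmt15embed γ δ ∈ stmt15Sp2 := by
  rw [embed_eq]
  refine sp2_intro _ _ _ _ ?_ ?_ ?_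
  · rw [dg_transpose, dg_mul, dg_transpose, dg_mul]
    exact dg_congr (mul_comm _ _) (mul_comm _ _)
  · rw [dg_transpose, dg_mul, dg_transpose, dg_mul]
    exact dg_congr (mul_comm _ _) (mul_comm _ _)
  · rw [dg_transpose, dg_mul, dg_transpose, dg_mul, dg_sub, ← dg_one]
    exact dg_congr (by linear_combination sl2_det γ) (by linear_combination sl2_det δ)

/-! ## Gamma20 lemmas -/

lemma gamma20_of_quad {A B D : SM2} (h : quad A B 0 D ∈ stmt15Sp2) :
    quad A B 0 D ∈ stmt15Gamma20 := by
  refine ⟨h, ?_, ?_, ?_, ?_⟩ <;>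
    simp [quad, Matrix.vecHead, Matrix.vecTail]

lemma gamma20_mul {p q : SM4} (hp : p ∈ stmt15Gamma20) (hq : q ∈ stmt15Gamma20) :
    p * q ∈ stmt15Gamma20 := by
  obtain ⟨hps, hp1, hp2, hp3, hp4⟩ := hp
  obtain ⟨hqs, hq1, hq2, hq3, hq4⟩ := hq
  refine ⟨sp2_mul hps hqs, ?_, ?_, ?_, ?_⟩ <;>
    rw [Matrix.mul_apply, Fin.sum_univ_four] <;>
    simp [hp1, hp2, hp3, hp4, hq1, hq2, hq3, hq4]

lemma rowop_mem {F F' : SM2} (h1 : F * F' = 1) (h2 : F' * F = 1) :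
    quad F'ᵀ 0 0 F ∈ stmt15Gamma20 := by
  refine gamma20_of_quad (sp2_intro _ _ _ _ ?_ ?_ ?_)
  · simp
  · simp
  · rw [Matrix.transpose_transpose, Matrix.transpose_zero]
    simp [h2]

lemma rowop_mul {F F' : SM2} (h2 : F' * F = 1) :
    quad Fᵀ 0 0 F' * quad F'ᵀ 0 0 F = 1 := by
  rw [quad_mul, ← quad_one]
  refine quad_congr ?_ ?_ ?_ ?_
  · have e : Fᵀ*F'ᵀ + 0*0 = (F'*F)ᵀ := by rw [Matrix.transpose_mul]; noncomm_ring
    rw [e, h2, Matrix.transpose_one]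
  · noncomm_ring
  · noncomm_ring
  · have e : (0:SM2)*0 + F'*F = F'*F := by noncomm_ring
    rw [e, h2]

lemma u2_mem (a : SM2) (ha : aᵀ = a) : quad 1 0 a 1 ∈ stmt15Sp2 := by
  refine sp2_intro _ _ _ _ ?_ ?_ ?_ <;> simp [ha]

/-! ## The Claim and transfer steps -/

def SClaim (g : SM4) : Prop :=
  ∃ d : ℕ, ∃ p ∈ stmt15Gamma20, ∃ γ δ : SSL2, g = p * stmt15rep d * stmt15embed γ δ

lemma rep_eq (d : ℕ) : stmt15rep d = quad 1 0 !![0,(d:ℤ);(d:ℤ),0] 1 := U2_eq _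

lemma claim_step {F F' : SM2} (h1 : F * F' = 1) (h2 : F' * F = 1) (γ δ : SSL2) (g : SM4)
    (h : SClaim (quad F'ᵀ 0 0 F * g * stmt15embed γ δ)) : SClaim g := by
  obtain ⟨d, p, hp, γ₀, δ₀, heq⟩ := h
  have e1 : quad Fᵀ 0 0 F' * (quad F'ᵀ 0 0 F * g * stmt15embed γ δ) * stmt15embed γ⁻¹ δ⁻¹
      = g := by
    calc quad Fᵀ 0 0 F' * (quad F'ᵀ 0 0 F * g * stmt15embed γ δ) * stmt15embed γ⁻¹ δ⁻¹
        = (quad Fᵀ 0 0 F' * quad F'ᵀ 0 0 F) *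
            (g * (stmt15embed γ δ * stmt15embed γ⁻¹ δ⁻¹)) := by
          simp only [Matrix.mul_assoc]
      _ = g := by
          rw [rowop_mul h2, embed_mul, mul_inv_cancel, mul_inv_cancel, embed_one]
          simp
  rw [heq] at e1
  refine ⟨d, quad Fᵀ 0 0 F' * p, gamma20_mul (rowop_mem h2 h1) hp, γ₀ * γ⁻¹, δ₀ * δ⁻¹, ?_⟩
  rw [← e1]
  simp only [Matrix.mul_assoc, embed_mul]

lemma cdmat_symm (d : ℕ) : (!![0,(d:ℤ);(d:ℤ),0])ᵀ = !![0,(d:ℤ);(d:ℤ),0] := by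
  ext i j; fin_cases i <;> fin_cases j <;> simp

lemma claim_of_C0 {A B C D : SM2} (hg : quad A B C D ∈ stmt15Sp2) (d : ℕ)
    (hC : C = D * !![0,(d:ℤ);(d:ℤ),0]) : SClaim (quad A B C D) := by
  set K : SM2 := !![0,(d:ℤ);(d:ℤ),0] with hK
  have hKT : Kᵀ = K := cdmat_symm d
  have hmemU : quad 1 0 (-K) 1 ∈ stmt15Sp2 := by
    refine u2_mem (-K) ?_
    rw [Matrix.transpose_neg, hKT]
  have hpq : quad A B C D * quad 1 0 (-K) 1
      = quad (A*1 + B*(-K)) (A*0 + B*1) 0 (C*0 + D*1) := by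
    rw [quad_mul]
    refine quad_congr rfl rfl ?_ rfl
    rw [hC]; noncomm_ring
  have hpmem : quad A B C D * quad 1 0 (-K) 1 ∈ stmt15Gamma20 := by
    rw [hpq]
    exact gamma20_of_quad (by rw [← hpq]; exact sp2_mul hg hmemU)
  refine ⟨d, quad A B C D * quad 1 0 (-K) 1, hpmem, 1, 1, ?_⟩
  rw [embed_one, rep_eq, ← hK, Matrix.mul_one, Matrix.mul_assoc]
  have : quad 1 0 (-K) 1 * quad 1 0 K 1 = 1 := by
    rw [quad_mul, ← quad_one]
    refine quad_congr ?_ ?_ ?_ ?_ <;> noncomm_ring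
  rw [this, Matrix.mul_one]

/-! ## Bezout and Smith normal form for 2x2 integer matrices -/

lemma eq2' {a b c d e f g h : ℤ} (h1 : a = e) (h2 : b = f) (h3 : c = g) (h4 : d = h) :
    (!![a,b;c,d] : SM2) = !![e,f;g,h] := by rw [h1, h2, h3, h4]

lemma bezout_col (a c : ℤ) : ∃ γ : SSL2,
    γ 0 0 * a + γ 0 1 * c = (Int.gcd a c : ℤ) ∧ γ 1 0 * a + γ 1 1 * c = 0 := by
  by_cases h0 : (Int.gcd a c : ℤ) = 0
  · have h0' : Int.gcd a c = 0 := by exact_mod_cast h0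
    obtain ⟨ha, hc⟩ := Int.gcd_eq_zero_iff.mp h0'
    refine ⟨1, ?_, ?_⟩ <;>
      simp [sl2_one_apply, ha, hc, h0']
  · set gz : ℤ := (Int.gcd a c : ℤ) with hg
    set x := Int.gcdA a c with hx
    set y := Int.gcdB a c with hy
    have hbez : gz = a * x + c * y := Int.gcd_eq_gcd_ab a c
    obtain ⟨a1, ha1⟩ : gz ∣ a := Int.gcd_dvd_left a c
    obtain ⟨c1, hc1⟩ : gz ∣ c := Int.gcd_dvd_right a c
    have hdet : x * a1 - y * (-c1) = 1 := by
      have : gz * (x * a1 - y * (-c1)) = gz * 1 := by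
        calc gz * (x * a1 - y * (-c1)) = (gz * a1) * x + (gz * c1) * y := by ring
          _ = a * x + c * y := by rw [← ha1, ← hc1]
          _ = gz * 1 := by rw [← hbez]; ring
      exact mul_left_cancel₀ h0 this
    refine ⟨mkSL2 x y (-c1) a1 hdet, ?_, ?_⟩
    · show x * a + y * c = gz
      linear_combination -hbez
    · show (-c1) * a + a1 * c = 0
      linear_combination (-c1) * ha1 + a1 * hc1

lemma comp_lr {L1 G1 L2 G2 : SSL2} {X X' X'' : SM2}
    (h1 : (L1 : SM2) * X * (G1 : SM2) = X') (h2 : (L2 : SM2) * X' * (G2 : SM2) = X'') :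
    ((L2 * L1 : SSL2) : SM2) * X * ((G1 * G2 : SSL2) : SM2) = X'' := by
  rw [Matrix.SpecialLinearGroup.coe_mul, Matrix.SpecialLinearGroup.coe_mul, ← h2, ← h1]
  noncomm_ring

lemma snf_zero (x00 x01 x10 x11 : ℤ) (h : Int.gcd x00 x10 = 0) :
    ∃ (L γ : SSL2) (a b : ℤ), 0 ≤ a ∧ a ∣ b ∧
      (L : SM2) * !![x00, x01; x10, x11] * (γ : SM2) = !![a, 0; 0, b] := by
  obtain ⟨hx00, hx10⟩ := Int.gcd_eq_zero_iff.mp h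
  obtain ⟨γB, hb1, hb2⟩ := bezout_col x01 x11
  refine ⟨γB, mkSL2 0 (-1) 1 0 (by norm_num), (Int.gcd x01 x11 : ℤ), 0,
    Int.natCast_nonneg _, dvd_zero _, ?_⟩
  rw [hx00, hx10, Matrix.eta_fin_two (γB : SM2), mkSL2_coe, Matrix.mul_fin_two,
    Matrix.mul_fin_two]
  exact eq2' (by linear_combination hb1) (by ring) (by linear_combination hb2) (by ring)

lemma snf_aux : ∀ N : ℕ, ∀ x00 x01 x10 x11 : ℤ, Int.gcd x00 x10 ≤ N →
    ∃ (L γ : SSL2) (a b : ℤ), 0 ≤ a ∧ a ∣ b ∧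
      (L : SM2) * !![x00, x01; x10, x11] * (γ : SM2) = !![a, 0; 0, b] := by
  intro N
  induction N with
  | zero =>
    intro x00 x01 x10 x11 hN
    exact snf_zero _ _ _ _ (Nat.le_zero.mp hN)
  | succ N IH =>
    intro x00 x01 x10 x11 hN
    by_cases h0 : Int.gcd x00 x10 = 0
    · exact snf_zero _ _ _ _ h0
    · set gz : ℤ := (Int.gcd x00 x10 : ℤ) with hgzdef
      have hgz : 0 < gz := by
        have h' : 0 < Int.gcd x00 x10 := Nat.pos_of_ne_zero h0
        rw [hgzdef]
        exact_mod_cast h'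
      obtain ⟨L₁, hb1, hb2⟩ := bezout_col x00 x10
      set p := L₁ 0 0 * x01 + L₁ 0 1 * x11 with hp
      set r := L₁ 1 0 * x01 + L₁ 1 1 * x11 with hr
      have step1 : ((1 : SSL2) : SM2) * ((L₁ : SM2) * !![x00, x01; x10, x11] * ((1:SSL2) : SM2))
          = !![gz, p; 0, r] := by
        rw [Matrix.SpecialLinearGroup.coe_one, Matrix.one_mul, Matrix.mul_one,
          Matrix.eta_fin_two (L₁ : SM2), Matrix.mul_fin_two]
        exact eq2' hb1 rfl hb2 rfl
      have step1' : (L₁ : SM2) * !![x00, x01; x10, x11] * ((1:SSL2) : SM2)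
          = !![gz, p; 0, r] := by
        rw [← step1, Matrix.SpecialLinearGroup.coe_one, Matrix.one_mul]
      set k := p / gz with hk
      set ρ := p % gz with hρ
      have hρeq : gz * k + ρ = p := Int.mul_ediv_add_emod p gz
      have hρ0 : 0 ≤ ρ := Int.emod_nonneg p (ne_of_gt hgz)
      have hρlt : ρ < gz := Int.emod_lt_of_pos p hgz
      have hdet1 : (1:ℤ) * 1 - (-k) * 0 = 1 := by ring
      set γ₂ : SSL2 := mkSL2 1 (-k) 0 1 hdet1 with hγ₂
      have step2 : ((1:SSL2) : SM2) * !![gz, p; 0, r] * (γ₂ : SM2) = !![gz, ρ; 0, r] := by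
        rw [Matrix.SpecialLinearGroup.coe_one, Matrix.one_mul, mkSL2_coe, Matrix.mul_fin_two]
        exact eq2' (by ring) (by linear_combination -hρeq) (by ring) (by ring)
      -- helper for the recursion step, used in both branches
      have recurse : ∀ ρ' : ℤ, ρ' ≠ 0 → 0 ≤ ρ' → ρ' < gz → ∀ r' : ℤ,
          ∃ (L γ : SSL2) (a b : ℤ), 0 ≤ a ∧ a ∣ b ∧
            (L : SM2) * !![ρ', -gz; r', 0] * (γ : SM2) = !![a, 0; 0, b] := by
        intro ρ' hne h0' hlt r'
        apply IH
        have h1 : (ρ'.natAbs : ℤ) = ρ' := Int.natAbs_of_nonneg h0'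
        have h2 : ρ'.natAbs < Int.gcd x00 x10 := by
          have h2' := Int.natAbs_lt_natAbs_of_nonneg_of_lt h0' hlt
          simpa [hgzdef] using h2'
        have h3 : Int.gcd ρ' r' ≤ ρ'.natAbs := by
          have hpos : 0 < ρ'.natAbs := Int.natAbs_pos.mpr hne
          exact Nat.gcd_le_left _ hpos
        omega
      have hdetS : (0:ℤ) * 0 - (-1) * 1 = 1 := by ring
      set γs : SSL2 := mkSL2 0 (-1) 1 0 hdetS with hγs
      by_cases hρz : ρ = 0
      · by_cases hdr : gz ∣ r
        · have c1 := comp_lr step1' step2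
          rw [hρz] at c1
          exact ⟨_, _, gz, r, le_of_lt hgz, hdr, c1⟩
        · set k₂ := r / gz with hk₂
          set ρ₂ := r % gz with hρ₂def
          have hρ₂eq : gz * k₂ + ρ₂ = r := Int.mul_ediv_add_emod r gz
          have hρ₂0 : 0 ≤ ρ₂ := Int.emod_nonneg r (ne_of_gt hgz)
          have hρ₂lt : ρ₂ < gz := Int.emod_lt_of_pos r hgz
          have hρ₂ne : ρ₂ ≠ 0 := fun hcon => hdr (Int.dvd_of_emod_eq_zero hcon)
          have hdet3 : (1:ℤ) * 1 - 1 * 0 = 1 := by ring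
          set L₃ : SSL2 := mkSL2 1 1 0 1 hdet3 with hL₃
          have step3 : (L₃ : SM2) * !![gz, 0; 0, r] * ((1:SSL2) : SM2) = !![gz, r; 0, r] := by
            rw [Matrix.SpecialLinearGroup.coe_one, Matrix.mul_one, mkSL2_coe,
              Matrix.mul_fin_two]
            exact eq2' (by ring) (by ring) (by ring) (by ring)
          have hdet4 : (1:ℤ) * 1 - (-k₂) * 0 = 1 := by ring
          set γ₃ : SSL2 := mkSL2 1 (-k₂) 0 1 hdet4 with hγ₃
          have step4 : ((1:SSL2) : SM2) * !![gz, r; 0, r] * (γ₃ : SM2) = !![gz, ρ₂; 0, r] := by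
            rw [Matrix.SpecialLinearGroup.coe_one, Matrix.one_mul, mkSL2_coe,
              Matrix.mul_fin_two]
            exact eq2' (by ring) (by linear_combination -hρ₂eq) (by ring) (by ring)
          have step5 : ((1:SSL2) : SM2) * !![gz, ρ₂; 0, r] * (γs : SM2) = !![ρ₂, -gz; r, 0] := by
            rw [Matrix.SpecialLinearGroup.coe_one, Matrix.one_mul, mkSL2_coe,
              Matrix.mul_fin_two]
            exact eq2' (by ring) (by ring) (by ring) (by ring)
          obtain ⟨L', γ', a, b, ha, hab, heq'⟩ := recurse ρ₂ hρ₂ne hρ₂0 hρ₂lt r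
          have c1 := comp_lr step1' step2
          rw [hρz] at c1
          have c2 := comp_lr c1 step3
          have c3 := comp_lr c2 step4
          have c4 := comp_lr c3 step5
          have c5 := comp_lr c4 heq'
          exact ⟨_, _, a, b, ha, hab, c5⟩
      · have step5 : ((1:SSL2) : SM2) * !![gz, ρ; 0, r] * (γs : SM2) = !![ρ, -gz; r, 0] := by
          rw [Matrix.SpecialLinearGroup.coe_one, Matrix.one_mul, mkSL2_coe,
            Matrix.mul_fin_two]
          exact eq2' (by ring) (by ring) (by ring) (by ring)
        obtain ⟨L', γ', a, b, ha, hab, heq'⟩ := recurse ρ hρz hρ0 hρlt r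
        have c1 := comp_lr step1' step2
        have c2 := comp_lr c1 step5
        have c3 := comp_lr c2 heq'
        exact ⟨_, _, a, b, ha, hab, c3⟩

lemma snf (x00 x01 x10 x11 : ℤ) :
    ∃ (L γ : SSL2) (a b : ℤ), 0 ≤ a ∧ a ∣ b ∧
      (L : SM2) * !![x00, x01; x10, x11] * (γ : SM2) = !![a, 0; 0, b] :=
  snf_aux (Int.gcd x00 x10) x00 x01 x10 x11 le_rfl

/-! ## Surjectivity machinery -/

lemma tr2 (a b c d : ℤ) : (!![a,b;c,d] : SM2)ᵀ = !![a,c;b,d] := by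
  ext i j; fin_cases i <;> fin_cases j <;> simp

lemma add2 (a b c d e f g h : ℤ) :
    (!![a,b;c,d] : SM2) + !![e,f;g,h] = !![a+e, b+f; c+g, d+h] := by
  ext i j; fin_cases i <;> fin_cases j <;> simp

lemma one2 : (!![1,0;0,1] : SM2) = 1 := by
  ext i j; fin_cases i <;> fin_cases j <;> simp [Matrix.one_apply]

lemma sl2_one00 : (1 : SSL2) 0 0 = (1:ℤ) := by simp [sl2_one_apply]
lemma sl2_one01 : (1 : SSL2) 0 1 = (0:ℤ) := by simp [sl2_one_apply]
lemma sl2_one10 : (1 : SSL2) 1 0 = (0:ℤ) := by simp [sl2_one_apply]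
lemma sl2_one11 : (1 : SSL2) 1 1 = (1:ℤ) := by simp [sl2_one_apply]

lemma mk00 (a b c d : ℤ) (h : a*d - b*c = 1) : (mkSL2 a b c d h) 0 0 = a := rfl
lemma mk01 (a b c d : ℤ) (h : a*d - b*c = 1) : (mkSL2 a b c d h) 0 1 = b := rfl
lemma mk10 (a b c d : ℤ) (h : a*d - b*c = 1) : (mkSL2 a b c d h) 1 0 = c := rfl
lemma mk11 (a b c d : ℤ) (h : a*d - b*c = 1) : (mkSL2 a b c d h) 1 1 = d := rfl

lemma conj_quad (F F' A B C D : SM2) (γ δ : SSL2) :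
    quad F'ᵀ 0 0 F * quad A B C D * stmt15embed γ δ =
    quad (F'ᵀ*A*dg (γ 0 0) (δ 0 0) + F'ᵀ*B*dg (γ 1 0) (δ 1 0))
         (F'ᵀ*A*dg (γ 0 1) (δ 0 1) + F'ᵀ*B*dg (γ 1 1) (δ 1 1))
         (F*C*dg (γ 0 0) (δ 0 0) + F*D*dg (γ 1 0) (δ 1 0))
         (F*C*dg (γ 0 1) (δ 0 1) + F*D*dg (γ 1 1) (δ 1 1)) := by
  rw [embed_eq, quad_mul, quad_mul]
  refine quad_congr ?_ ?_ ?_ ?_ <;> noncomm_ring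

lemma step_reduce {F F' : SM2} (h1 : F * F' = 1) (h2 : F' * F = 1) (γ δ : SSL2)
    {A B C D C' D' : SM2}
    (hC : F*C*dg (γ 0 0) (δ 0 0) + F*D*dg (γ 1 0) (δ 1 0) = C')
    (hD : F*C*dg (γ 0 1) (δ 0 1) + F*D*dg (γ 1 1) (δ 1 1) = D')
    (next : ∀ A' B' : SM2, quad A' B' C' D' ∈ stmt15Sp2 → SClaim (quad A' B' C' D'))
    (hg : quad A B C D ∈ stmt15Sp2) : SClaim (quad A B C D) := by
  apply claim_step h1 h2 γ δ
  rw [conj_quad, hC, hD]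
  apply next
  rw [← hC, ← hD, ← conj_quad]
  exact sp2_mul (sp2_mul (rowop_mem h1 h2).1 hg) (embed_mem γ δ)

/-- Final stage: bottom blocks `C = [[1,0],[0,h]]`, `D = [[0,q],[n,0]]` with `h = ±1`,
`n = q*h`. -/
lemma stage3 (A B : SM2) (n q h : ℤ) (hn : 0 ≤ n) (hh : h = 1 ∨ h = -1) (hnq : n = q * h)
    (hg : quad A B !![1,0;0,h] !![0,q;n,0] ∈ stmt15Sp2) :
    SClaim (quad A B !![1,0;0,h] !![0,q;n,0]) := by
  have hcast : ((n.toNat : ℕ) : ℤ) = n := Int.toNat_of_nonneg hn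
  have hnext : ∀ A' B' : SM2, quad A' B' !![0,-n;n,0] !![-1,0;0,1] ∈ stmt15Sp2 →
      SClaim (quad A' B' !![0,-n;n,0] !![-1,0;0,1]) := by
    intro A' B' hg'
    refine claim_of_C0 hg' n.toNat ?_
    rw [hcast, Matrix.mul_fin_two]
    exact eq2' (by ring) (by ring) (by ring) (by ring)
  have h11 : (1:SM2) * 1 = 1 := Matrix.one_mul 1
  rcases hh with h1 | hm1
  · subst h1
    have hq : q = n := by linear_combination -hnq
    subst hq
    refine step_reduce h11 h11 (mkSL2 0 (-1) 1 0 (by norm_num)) (mkSL2 0 1 (-1) 0 (by norm_num))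
      ?_ ?_ hnext hg
    · simp only [mk00, mk01, mk10, mk11, dg, Matrix.one_mul, Matrix.mul_fin_two, add2]
      exact eq2' (by ring) (by ring) (by ring) (by ring)
    · simp only [mk00, mk01, mk10, mk11, dg, Matrix.one_mul, Matrix.mul_fin_two, add2]
      exact eq2' (by ring) (by ring) (by ring) (by ring)
  · subst hm1
    have hq : q = -n := by linear_combination hnq
    subst hq
    refine step_reduce h11 h11 (mkSL2 0 (-1) 1 0 (by norm_num)) (mkSL2 0 (-1) 1 0 (by norm_num))
      ?_ ?_ hnext hg
    · simp only [mk00, mk01, mk10, mk11, dg, Matrix.one_mul, Matrix.mul_fin_two, add2]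
      exact eq2' (by ring) (by ring) (by ring) (by ring)
    · simp only [mk00, mk01, mk10, mk11, dg, Matrix.one_mul, Matrix.mul_fin_two, add2]
      exact eq2' (by ring) (by ring) (by ring) (by ring)

/-- After step A: bottom blocks `C = [[1,b₁],[0,h]]`, `D = [[0,q],[n,0]]`. -/
lemma stage2 (A B : SM2) (n b₁ q h : ℤ) (hn : 0 ≤ n)
    (hg : quad A B !![1,b₁;0,h] !![0,q;n,0] ∈ stmt15Sp2) :
    SClaim (quad A B !![1,b₁;0,h] !![0,q;n,0]) := by
  obtain ⟨-, r3, r4⟩ := sp_rels hg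
  rw [tr2, tr2, Matrix.mul_fin_two, Matrix.mul_fin_two] at r3
  obtain ⟨-, e2, -, -⟩ := eq2 r3
  have e4 := congrFun (congrFun r4 1) 1
  rw [Matrix.sub_apply, Matrix.mul_apply, Matrix.mul_apply, Fin.sum_univ_two,
    Fin.sum_univ_two] at e4
  simp only [Matrix.transpose_apply, Matrix.one_apply_eq] at e4
  norm_num at e4
  have hnq : n = q * h := by linear_combination e2
  have hunit : h * (q * A 1 0 - B 1 1) = 1 := by linear_combination e4 - A 1 0 * e2
  have hh : h = 1 ∨ h = -1 := Int.isUnit_iff.mp (IsUnit.of_mul_eq_one _ hunit)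
  set u : ℤ := q * A 1 0 - B 1 1 with hu
  have h1 : (!![1, -(b₁*u); 0, 1] : SM2) * !![1, b₁*u; 0, 1] = 1 := by
    rw [Matrix.mul_fin_two, ← one2]
    exact eq2' (by ring) (by ring) (by ring) (by ring)
  have h2 : (!![1, b₁*u; 0, 1] : SM2) * !![1, -(b₁*u); 0, 1] = 1 := by
    rw [Matrix.mul_fin_two, ← one2]
    exact eq2' (by ring) (by ring) (by ring) (by ring)
  refine step_reduce h1 h2 (mkSL2 1 (b₁*u*n) 0 1 (by ring)) 1 ?_ ?_
    (fun A' B' hg' => stage3 A' B' n q h hn hh hnq hg') hg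
  · simp only [mk00, mk01, mk10, mk11, sl2_one00, sl2_one01, sl2_one10, sl2_one11, dg,
      Matrix.mul_fin_two, add2]
    refine eq2' (by ring) (by rw [hu]; linear_combination (-b₁) * hunit) (by ring) (by ring)
  · simp only [mk00, mk01, mk10, mk11, sl2_one00, sl2_one01, sl2_one10, sl2_one11, dg,
      Matrix.mul_fin_two, add2]
    refine eq2' (by rw [hu]; ring) (by ring) (by ring) (by ring)

/-- Start of phase 2: bottom blocks `C = [[1,b],[0,e]]`, `D = [[0,q],[n,s]]`, `n ≥ 0`. -/
lemma stage1 (A B : SM2) (b e q s n : ℤ) (hn : 0 ≤ n)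
    (hg : quad A B !![1,b;0,e] !![0,q;n,s] ∈ stmt15Sp2) :
    SClaim (quad A B !![1,b;0,e] !![0,q;n,s]) := by
  obtain ⟨γB, hb1, hb2⟩ := bezout_col e s
  have hδdet : ((γB : SM2)ᵀ).det = 1 := by rw [Matrix.det_transpose]; exact γB.prop
  set δ₁ : SSL2 := ⟨(γB : SM2)ᵀ, hδdet⟩ with hδ₁
  have hδe : ∀ i j, δ₁ i j = γB j i := fun _ _ => rfl
  have h11 : (1:SM2) * 1 = 1 := Matrix.one_mul 1
  refine step_reduce h11 h11 1 δ₁ ?_ ?_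
    (fun A' B' hg' => stage2 A' B' n (b * γB 0 0 + q * γB 0 1) (b * γB 1 0 + q * γB 1 1)
      (Int.gcd e s : ℤ) hn hg') hg
  · simp only [hδe, Matrix.transpose_apply, sl2_one00, sl2_one01, sl2_one10, sl2_one11, dg,
      Matrix.one_mul, Matrix.mul_fin_two, add2]
    refine eq2' (by ring) (by ring) (by ring) (by linear_combination hb1)
  · simp only [hδe, Matrix.transpose_apply, sl2_one00, sl2_one01, sl2_one10, sl2_one11, dg,
      Matrix.one_mul, Matrix.mul_fin_two, add2]
    refine eq2' (by ring) (by ring) (by ring) (by linear_combination hb2)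

lemma surjQ (A B : SM2) (c00 c01 c10 c11 d00 d01 d10 d11 : ℤ)
    (hg : quad A B !![c00,c01;c10,c11] !![d00,d01;d10,d11] ∈ stmt15Sp2) :
    SClaim (quad A B !![c00,c01;c10,c11] !![d00,d01;d10,d11]) := by
  obtain ⟨L, γ₁, a, b, ha, hab, heq⟩ := snf c00 d00 c10 d10
  have hLeta : (L : SM2) = !![L 0 0, L 0 1; L 1 0, L 1 1] := Matrix.eta_fin_two _
  have hγeta : (γ₁ : SM2) = !![γ₁ 0 0, γ₁ 0 1; γ₁ 1 0, γ₁ 1 1] := Matrix.eta_fin_two _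
  rw [hLeta, hγeta, Matrix.mul_fin_two, Matrix.mul_fin_two] at heq
  obtain ⟨E1, E2, E3, E4⟩ := eq2 heq
  have h1 : (L : SM2) * ((L⁻¹ : SSL2) : SM2) = 1 := by
    rw [← Matrix.SpecialLinearGroup.coe_mul, mul_inv_cancel, Matrix.SpecialLinearGroup.coe_one]
  have h2 : ((L⁻¹ : SSL2) : SM2) * (L : SM2) = 1 := by
    rw [← Matrix.SpecialLinearGroup.coe_mul, inv_mul_cancel, Matrix.SpecialLinearGroup.coe_one]
  refine step_reduce (C' := !![a, L 0 0 * c01 + L 0 1 * c11; 0, L 1 0 * c01 + L 1 1 * c11])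
    (D' := !![0, L 0 0 * d01 + L 0 1 * d11; b, L 1 0 * d01 + L 1 1 * d11])
    h1 h2 γ₁ 1 ?_ ?_ (fun A' B' hg' => ?_) hg
  · simp only [sl2_one00, sl2_one10]
    rw [hLeta]
    simp only [dg, Matrix.mul_fin_two, add2, Matrix.of_apply, Matrix.cons_val',
      Matrix.cons_val_zero, Matrix.cons_val_one, Matrix.head_cons, Matrix.empty_val',
      Matrix.cons_val_fin_one, Matrix.head_fin_const]
    exact eq2' (by linear_combination E1) (by ring) (by linear_combination E3) (by ring)
  · simp only [sl2_one01, sl2_one11]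
    rw [hLeta]
    simp only [dg, Matrix.mul_fin_two, add2, Matrix.of_apply, Matrix.cons_val',
      Matrix.cons_val_zero, Matrix.cons_val_one, Matrix.head_cons, Matrix.empty_val',
      Matrix.cons_val_fin_one, Matrix.head_fin_const]
    exact eq2' (by linear_combination E2) (by ring) (by linear_combination E4) (by ring)
  · obtain ⟨r1, -, -⟩ := sp_rels hg'
    have e := congrFun (congrFun r1 0) 0
    rw [Matrix.sub_apply, Matrix.mul_apply, Matrix.mul_apply, Fin.sum_univ_two,
      Fin.sum_univ_two] at e
    simp only [Matrix.transpose_apply, Matrix.one_apply_eq] at e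
    norm_num at e
    obtain ⟨t, ht⟩ := hab
    have hadvd : a * (t * A' 1 0 - B' 0 0) = 1 := by
      linear_combination e - A' 1 0 * ht
    have ha1 : a = 1 := by
      rcases Int.isUnit_iff.mp (IsUnit.of_mul_eq_one _ hadvd) with h | h
      · exact h
      · omega
    subst ha1
    rcases le_or_gt 0 b with hb | hb
    · exact stage1 A' B' _ _ _ _ b hb hg'
    · have hFF : (!![1,0;0,-1] : SM2) * !![1,0;0,-1] = 1 := by
        rw [Matrix.mul_fin_two, ← one2]
        exact eq2' (by ring) (by ring) (by ring) (by ring)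
      refine step_reduce
        (C' := !![1, L 0 0 * c01 + L 0 1 * c11; 0, -(L 1 0 * c01 + L 1 1 * c11)])
        (D' := !![0, L 0 0 * d01 + L 0 1 * d11; -b, -(L 1 0 * d01 + L 1 1 * d11)])
        hFF hFF 1 1 ?_ ?_
        (fun A'' B'' hg'' => stage1 A'' B'' _ _ _ _ (-b) (by omega) hg'') hg'
      · simp only [sl2_one00, sl2_one01, sl2_one10, sl2_one11, dg, Matrix.mul_fin_two, add2]
        exact eq2' (by ring) (by ring) (by ring) (by ring)
      · simp only [sl2_one00, sl2_one01, sl2_one10, sl2_one11, dg, Matrix.mul_fin_two, add2]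
        exact eq2' (by ring) (by ring) (by ring) (by ring)

lemma mainSurj (g : SM4) (hg : g ∈ stmt15Sp2) : SClaim g := by
  have he := g_eq_quad g
  rw [he] at hg ⊢
  exact surjQ _ _ _ _ _ _ _ _ _ _ hg

/-! ## Injectivity -/

lemma zero2 : (!![0,0;0,0] : SM2) = 0 := by
  ext i j; fin_cases i <;> fin_cases j <;> simp

lemma inj_lemma (d d' : ℕ)
    (h : ∃ p ∈ stmt15Gamma20, ∃ γ δ : SSL2,
      stmt15rep d' = p * stmt15rep d * stmt15embed γ δ) : d = d' := by
  obtain ⟨p, ⟨hps, hp1, hp2, hp3, hp4⟩, γ, δ, heq⟩ := h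
  have hpq := g_eq_quad p
  rw [hp1, hp2, hp3, hp4, zero2] at hpq
  rw [hpq, rep_eq, rep_eq, embed_eq, quad_mul, quad_mul] at heq
  obtain ⟨-, -, eC, eD⟩ := quad_inj heq
  set dz : ℤ := (d : ℤ) with hdz
  set dz' : ℤ := (d' : ℤ) with hdz'
  set K : SM2 := !![0,dz;dz,0] with hK
  set Dp : SM2 := !![p 2 2, p 2 3; p 3 2, p 3 3] with hDp
  set P : SM2 := dg (γ 0 0) (δ 0 0) with hP
  set Q : SM2 := dg (γ 0 1) (δ 0 1) with hQ
  set R : SM2 := dg (γ 1 0) (δ 1 0) with hR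
  set S : SM2 := dg (γ 1 1) (δ 1 1) with hS
  have eC' : Dp * (K * P + R) = !![0,dz';dz',0] := by
    rw [eC]
    noncomm_ring
  have eD' : Dp * (K * Q + S) = 1 := by
    rw [eD]
    noncomm_ring
  have hdet : (K * Q + S).det * Dp.det = 1 := by
    rw [mul_comm, ← Matrix.det_mul, eD', Matrix.det_one]
  have hMDp : (K * Q + S) * Dp = 1 := mul_eq_one_comm.mp eD'
  have e5 : K * P + R = (K * Q + S) * !![0,dz';dz',0] := by
    calc K * P + R = ((K * Q + S) * Dp) * (K * P + R) := by rw [hMDp, Matrix.one_mul]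
      _ = (K * Q + S) * (Dp * (K * P + R)) := by rw [Matrix.mul_assoc]
      _ = (K * Q + S) * !![0,dz';dz',0] := by rw [eC']
  have hKP : K * P + R = !![γ 1 0, dz * δ 0 0; dz * γ 0 0, δ 1 0] := by
    rw [hK, hP, hR]
    simp only [dg, Matrix.mul_fin_two, add2, Matrix.of_apply, Matrix.cons_val',
      Matrix.cons_val_zero, Matrix.cons_val_one, Matrix.head_cons, Matrix.empty_val',
      Matrix.cons_val_fin_one, Matrix.head_fin_const]
    exact eq2' (by ring) (by ring) (by ring) (by ring)
  have hKQ : K * Q + S = !![γ 1 1, dz * δ 0 1; dz * γ 0 1, δ 1 1] := by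
    rw [hK, hQ, hS]
    simp only [dg, Matrix.mul_fin_two, add2, Matrix.of_apply, Matrix.cons_val',
      Matrix.cons_val_zero, Matrix.cons_val_one, Matrix.head_cons, Matrix.empty_val',
      Matrix.cons_val_fin_one, Matrix.head_fin_const]
    exact eq2' (by ring) (by ring) (by ring) (by ring)
  rw [hKP, hKQ, Matrix.mul_fin_two] at e5
  obtain ⟨s1, s2, s3, s4⟩ := eq2 e5
  rw [hKQ, Matrix.det_fin_two_of] at hdet
  have hu : IsUnit (γ 1 1 * δ 1 1 - dz * δ 0 1 * (dz * γ 0 1)) :=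
    IsUnit.of_mul_eq_one _ hdet
  have hdd : dz' * (γ 1 1 * δ 1 1 - dz * δ 0 1 * (dz * γ 0 1)) = dz := by
    have hdδ := sl2_det δ
    linear_combination dz * hdδ - δ 1 1 * s2 + dz * δ 0 1 * s4
  rcases Int.isUnit_iff.mp hu with h1 | h1 <;> rw [h1] at hdd <;> omega

/-- The matrices `U₂(0₂)` and `U₂([[0,d],[d,0]])`, `d ≥ 1`, form a complete set of
representatives for `Γ_{2,0} \ Sp(2,ℤ) / l_{1,1}(SL₂(ℤ) × SL₂(ℤ))`: every element of
`Sp(2,ℤ)` lies in exactly one of these double cosets. -/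
theorem stmt15 :
    (∀ g ∈ stmt15Sp2, ∃ d : ℕ, ∃ p ∈ stmt15Gamma20,
      ∃ γ δ : Matrix.SpecialLinearGroup (Fin 2) ℤ,
        g = p * stmt15rep d * stmt15embed γ δ) ∧
    (∀ d d' : ℕ, (∃ p ∈ stmt15Gamma20,
      ∃ γ δ : Matrix.SpecialLinearGroup (Fin 2) ℤ,
        stmt15rep d' = p * stmt15rep d * stmt15embed γ δ) → d = d') := by
  exact ⟨fun g hg => mainSurj g hg, fun d d' h => inj_lemma d d' h⟩
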